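/- Suppose Q ∈ C¹([0,T)×[0,1]) and N ∈ C([0,T)) with N positive satisfy ∂_τQ(τ,η) + ∂_ηQ(τ,η) = 1/N(τ) + K(Q(τ,η)) for τ ∈ (0,T), η ∈ (0,1), together with the constraint K(Φ_F) < ∂_ηQ(τ,1) < ∞ for all τ ∈ [0,T), and the initial datum satisfies Q(0,1) = Φ_F. Then the following two statements are equivalent: (a) 1/N(τ) = ∂_ηQ(τ,1) − K(Φ_F) for all τ ∈ [0,T); (b) Q(τ,1) = Φ_F for all τ ∈ [0,T). -/

import Mathlib

open Real Set MeasureTheory Filter Topology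
open scoped ENNReal

noncomputable section

/-- The time interval `[0, T)` in `ℝ`, where `T : ℝ≥0∞` may be `∞`. -/
def Ico0 (T : ℝ≥0∞) : Set ℝ := {τ : ℝ | 0 ≤ τ ∧ ENNReal.ofReal τ < T}

/-- Partial derivative in the time variable (one-sided at `τ = 0`). -/
def pdTau (Q : ℝ → ℝ → ℝ) (τ η : ℝ) : ℝ := derivWithin (fun s => Q s η) (Ici 0) τ

/-- Partial derivative in the spatial variable (one-sided at `η = 0` and `η = 1`). -/
def pdEta (Q : ℝ → ℝ → ℝ) (τ η : ℝ) : ℝ := derivWithin (fun x => Q τ x) (Icc 0 1) η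

/-- Assumption 1.1: `K ∈ C²(ℝ)` with `K'`, `K''` bounded on `ℝ` and `K > 0` on `[0, Φ_F]`. -/
structure KAssump (K : ℝ → ℝ) (ΦF : ℝ) : Prop where
  smooth : ContDiff ℝ 2 K
  bdd1 : ∃ C : ℝ, ∀ x : ℝ, |deriv K x| ≤ C
  bdd2 : ∃ C : ℝ, ∀ x : ℝ, |deriv (deriv K) x| ≤ C
  pos : ∀ φ ∈ Icc (0 : ℝ) ΦF, 0 < K φ

/-- `k_min := K'(0) + ∫₀^{Φ_F} min(K''(φ), 0) dφ`. -/
def kmin (K : ℝ → ℝ) (ΦF : ℝ) : ℝ :=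
  deriv K 0 + ∫ φ in (0 : ℝ)..ΦF, min (deriv (deriv K) φ) 0

/-- `k_max := K'(0) + ∫₀^{Φ_F} max(K''(φ), 0) dφ`. -/
def kmax (K : ℝ → ℝ) (ΦF : ℝ) : ℝ :=
  deriv K 0 + ∫ φ in (0 : ℝ)..ΦF, max (deriv (deriv K) φ) 0

/-- Assumption (A2) on the initial datum. -/
structure A2 (K : ℝ → ℝ) (ΦF : ℝ) (Qinit : ℝ → ℝ) : Prop where
  reg : ContDiffOn ℝ 1 Qinit (Icc 0 1)
  mono : MonotoneOn Qinit (Icc 0 1)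
  init0 : Qinit 0 = 0
  init1 : Qinit 1 = ΦF
  deriv1 : K ΦF < derivWithin Qinit (Icc 0 1) 1
  compat : derivWithin Qinit (Icc 0 1) 1 - derivWithin Qinit (Icc 0 1) 0 = K ΦF - K 0

/-- A classical solution `(Q, N)` of the Q-system on `[0, T)` with initial datum `Qinit`. -/
structure IsQSol (K : ℝ → ℝ) (ΦF : ℝ) (T : ℝ≥0∞) (Qinit : ℝ → ℝ)
    (Q : ℝ → ℝ → ℝ) (N : ℝ → ℝ) : Prop where
  initReg : ContDiffOn ℝ 1 Qinit (Icc 0 1)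
  initMono : MonotoneOn Qinit (Icc 0 1)
  init0 : Qinit 0 = 0
  init1 : Qinit 1 = ΦF
  initDeriv : K ΦF < derivWithin Qinit (Icc 0 1) 1
  reg : ContDiffOn ℝ 1 (Function.uncurry Q) (Ico0 T ×ˢ Icc (0 : ℝ) 1)
  mono : ∀ τ ∈ Ico0 T, MonotoneOn (Q τ) (Icc 0 1)
  Ncont : ContinuousOn N (Ico0 T)
  Npos : ∀ τ ∈ Ico0 T, 0 < N τ
  pde : ∀ τ ∈ Ico0 T, ∀ η ∈ Ioo (0 : ℝ) 1,
    pdTau Q τ η + pdEta Q τ η = 1 / N τ + K (Q τ η)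
  bc : ∀ τ ∈ Ico0 T, Q τ 0 = 0
  Ndef : ∀ τ ∈ Ico0 T, 1 / N τ = pdEta Q τ 1 - K ΦF
  init : ∀ η ∈ Icc (0 : ℝ) 1, Q 0 η = Qinit η
  constraint : ∀ τ ∈ Ico0 T, K ΦF < pdEta Q τ 1

/-- A classical solution `(Q, Ñ)` of the relaxed system on `[0, T)` with initial datum `Qinit`,
where `Ñ` is unconstrained in sign. -/
structure IsRelaxedSol (K : ℝ → ℝ) (ΦF : ℝ) (T : ℝ≥0∞) (Qinit : ℝ → ℝ)
    (Q : ℝ → ℝ → ℝ) (Ntil : ℝ → ℝ) : Prop where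
  initReg : ContDiffOn ℝ 1 Qinit (Icc 0 1)
  init0 : Qinit 0 = 0
  init1 : Qinit 1 = ΦF
  reg : ContDiffOn ℝ 1 (Function.uncurry Q) (Ico0 T ×ˢ Icc (0 : ℝ) 1)
  Ncont : ContinuousOn Ntil (Ico0 T)
  pde : ∀ τ ∈ Ico0 T, ∀ η ∈ Ioo (0 : ℝ) 1,
    pdTau Q τ η + pdEta Q τ η = Ntil τ + K (Q τ η)
  bc : ∀ τ ∈ Ico0 T, Q τ 0 = 0
  Ndef : ∀ τ ∈ Ico0 T, Ntil τ = pdEta Q τ 1 - K ΦF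
  init : ∀ η ∈ Icc (0 : ℝ) 1, Q 0 η = Qinit η

/-- A steady state `(Q*, N*)` of the Q-system. -/
def IsSteadyState (K : ℝ → ℝ) (ΦF : ℝ) (Qs : ℝ → ℝ) (Ns : ℝ) : Prop :=
  ContDiffOn ℝ 1 Qs (Icc 0 1) ∧ 0 < Ns ∧
    (∀ η ∈ Icc (0 : ℝ) 1, derivWithin Qs (Icc 0 1) η = K (Qs η) + 1 / Ns) ∧
    Qs 0 = 0 ∧ Qs 1 = ΦF

/-- `P₀ f := f - ∫₀¹ f`. -/
def P0 (f : ℝ → ℝ) (η : ℝ) : ℝ := f η - ∫ x in (0 : ℝ)..1, f x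

/-- `H_init := Q_init' - K ∘ Q_init` (derivative within `[0,1]`). -/
def Hinit (K : ℝ → ℝ) (Qinit : ℝ → ℝ) (η : ℝ) : ℝ :=
  derivWithin Qinit (Icc 0 1) η - K (Qinit η)


private lemma eqAt_of_cwa {f g : ℝ → ℝ} {s t : Set ℝ} {x : ℝ}
    (hf : ContinuousWithinAt f s x) (hg : ContinuousWithinAt g s x)
    (hts : t ⊆ s) (hx : x ∈ closure t) (h : Set.EqOn f g t) : f x = g x := by
  have hne : (𝓝[t] x).NeBot := mem_closure_iff_nhdsWithin_neBot.1 hx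
  have h1 : Tendsto f (𝓝[t] x) (𝓝 (f x)) := hf.mono hts
  have h2 : Tendsto f (𝓝[t] x) (𝓝 (g x)) :=
    ((hg.mono hts).congr' (eventually_mem_nhdsWithin.mono fun y hy => (h hy).symm))
  exact tendsto_nhds_unique h1 h2

/-- Proposition 2.2: the definition of `N` via the boundary derivative is equivalent to the
hidden boundary condition `Q(τ,1) = Φ_F`. -/
theorem stmt1 (ΦF : ℝ) (hΦF : 0 < ΦF) (K : ℝ → ℝ) (hK : KAssump K ΦF)
    (T : ℝ≥0∞) (hT : 0 < T) (Q : ℝ → ℝ → ℝ) (N : ℝ → ℝ)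
    (hreg : ContDiffOn ℝ 1 (Function.uncurry Q) (Ico0 T ×ˢ Icc (0 : ℝ) 1))
    (hNcont : ContinuousOn N (Ico0 T))
    (hNpos : ∀ τ ∈ Ico0 T, 0 < N τ)
    (hpde : ∀ τ ∈ Ico0 T, 0 < τ → ∀ η ∈ Ioo (0 : ℝ) 1,
      pdTau Q τ η + pdEta Q τ η = 1 / N τ + K (Q τ η))
    (hcons : ∀ τ ∈ Ico0 T, K ΦF < pdEta Q τ 1)
    (hinit1 : Q 0 1 = ΦF) :
    (∀ τ ∈ Ico0 T, 1 / N τ = pdEta Q τ 1 - K ΦF) ↔ (∀ τ ∈ Ico0 T, Q τ 1 = ΦF) := by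
  classical
  -- Structure of the time interval
  have hIoc : Set.OrdConnected (Ico0 T) :=
    ⟨fun x hx y hy z hz => ⟨hx.1.trans hz.1,
      lt_of_le_of_lt (ENNReal.ofReal_le_ofReal hz.2) hy.2⟩⟩
  have hUopen : IsOpen {τ : ℝ | ENNReal.ofReal τ < T} :=
    isOpen_lt ENNReal.continuous_ofReal continuous_const
  have hIeq : Ico0 T = Ici 0 ∩ {τ : ℝ | ENNReal.ofReal τ < T} := rfl
  have h0mem : (0:ℝ) ∈ Ico0 T := ⟨le_refl 0, by simpa using hT⟩
  obtain ⟨ε, hε0, hεsub⟩ := Metric.isOpen_iff.1 hUopen 0 h0mem.2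
  have hεmem : ε/2 ∈ Ico0 T := ⟨by positivity, hεsub (by
    simp only [Metric.mem_ball, Real.dist_eq, sub_zero, abs_of_pos (by positivity : (0:ℝ) < ε/2)]
    linarith)⟩
  have hconv : Convex ℝ (Ico0 T) := convex_iff_ordConnected.2 hIoc
  have hUD : UniqueDiffOn ℝ (Ico0 T) := uniqueDiffOn_convex hconv
    ⟨ε/2, by rw [hIeq, interior_inter, interior_Ici, hUopen.interior_eq]
             exact ⟨mem_Ioi.2 (half_pos hε0), hεmem.2⟩⟩
  have hUDS : UniqueDiffOn ℝ (Ico0 T ×ˢ Icc (0:ℝ) 1) := hUD.prod (uniqueDiffOn_Icc one_pos)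
  have hnhds : ∀ τ ∈ Ico0 T, 𝓝[Ici (0:ℝ)] τ = 𝓝[Ico0 T] τ := fun τ hτ => by
    rw [hIeq]; exact nhdsWithin_restrict' _ (hUopen.mem_nhds hτ.2)
  -- the full Fréchet derivative and the partial derivatives
  set D : ℝ × ℝ → (ℝ × ℝ →L[ℝ] ℝ) :=
    fderivWithin ℝ (Function.uncurry Q) (Ico0 T ×ˢ Icc (0:ℝ) 1) with hDdef
  have hDcont : ContinuousOn D (Ico0 T ×ˢ Icc (0:ℝ) 1) :=
    hreg.continuousOn_fderivWithin hUDS le_rfl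
  have hfd : ∀ p ∈ Ico0 T ×ˢ Icc (0:ℝ) 1,
      HasFDerivWithinAt (Function.uncurry Q) (D p) (Ico0 T ×ˢ Icc (0:ℝ) 1) p :=
    fun p hp => ((hreg.differentiableOn one_ne_zero) p hp).hasFDerivWithinAt
  have hEta : ∀ τ ∈ Ico0 T, ∀ η ∈ Icc (0:ℝ) 1,
      HasDerivWithinAt (fun x => Q τ x) (D (τ, η) ((0:ℝ),(1:ℝ))) (Icc 0 1) η := by
    intro τ hτ η hη
    have h1 : HasDerivWithinAt (fun x : ℝ => (τ, x)) ((0:ℝ),(1:ℝ)) (Icc 0 1) η :=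
      ((hasDerivAt_const η τ).prodMk (hasDerivAt_id η)).hasDerivWithinAt
    exact (hfd (τ,η) ⟨hτ, hη⟩).comp_hasDerivWithinAt η h1 (fun x hx => ⟨hτ, hx⟩)
  have hpdEta : ∀ τ ∈ Ico0 T, ∀ η ∈ Icc (0:ℝ) 1, pdEta Q τ η = D (τ, η) ((0:ℝ),(1:ℝ)) :=
    fun τ hτ η hη => (hEta τ hτ η hη).derivWithin ((uniqueDiffOn_Icc one_pos) η hη)
  have hTau : ∀ τ ∈ Ico0 T, ∀ η ∈ Icc (0:ℝ) 1,
      HasDerivWithinAt (fun s => Q s η) (D (τ, η) ((1:ℝ),(0:ℝ))) (Ici 0) τ := by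
    intro τ hτ η hη
    have h1 : HasDerivWithinAt (fun s : ℝ => (s, η)) ((1:ℝ),(0:ℝ)) (Ico0 T) τ :=
      ((hasDerivAt_id τ).prodMk (hasDerivAt_const τ η)).hasDerivWithinAt
    have h2 : HasDerivWithinAt (fun s => Q s η) (D (τ,η) ((1:ℝ),(0:ℝ))) (Ico0 T) τ :=
      by have := (hfd (τ,η) ⟨hτ, hη⟩).comp_hasDerivWithinAt τ h1 (fun s (hs : s ∈ Ico0 T) => (⟨hs, hη⟩ : (s, η) ∈ Ico0 T ×ˢ Icc (0:ℝ) 1)); exact this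
    exact h2.mono_of_mem_nhdsWithin (by rw [hnhds τ hτ]; exact self_mem_nhdsWithin)
  have hpdTau : ∀ τ ∈ Ico0 T, ∀ η ∈ Icc (0:ℝ) 1, pdTau Q τ η = D (τ, η) ((1:ℝ),(0:ℝ)) :=
    fun τ hτ η hη => (hTau τ hτ η hη).derivWithin (uniqueDiffOn_Ici 0 τ hτ.1)
  have h1mem : (1:ℝ) ∈ Icc (0:ℝ) 1 := ⟨zero_le_one, le_refl 1⟩
  -- continuity of slices of D
  have hDsliceEta : ∀ τ ∈ Ico0 T, ∀ v : ℝ × ℝ,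
      ContinuousOn (fun η => D (τ, η) v) (Icc (0:ℝ) 1) := by
    intro τ hτ v
    have h1 : ContinuousOn (fun η : ℝ => D (τ, η)) (Icc (0:ℝ) 1) :=
      hDcont.comp ((continuous_const.prodMk continuous_id).continuousOn)
        (fun η hη => ⟨hτ, hη⟩)
    exact (ContinuousLinearMap.apply ℝ ℝ v).continuous.comp_continuousOn h1
  have hDsliceTau : ∀ v : ℝ × ℝ, ContinuousOn (fun τ => D (τ, 1) v) (Ico0 T) := by
    intro v
    have h1 : ContinuousOn (fun τ : ℝ => D (τ, 1)) (Ico0 T) :=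
      hDcont.comp ((continuous_id.prodMk continuous_const).continuousOn)
        (fun τ hτ => ⟨hτ, h1mem⟩)
    exact (ContinuousLinearMap.apply ℝ ℝ v).continuous.comp_continuousOn h1
  -- boundary version of the PDE at η = 1, for τ > 0
  have hbPDE : ∀ τ ∈ Ico0 T, 0 < τ →
      pdTau Q τ 1 + pdEta Q τ 1 = 1 / N τ + K (Q τ 1) := by
    intro τ hτ hτpos
    have hQcont : ContinuousOn (fun η => Q τ η) (Icc (0:ℝ) 1) :=
      hreg.continuousOn.comp ((continuous_const.prodMk continuous_id).continuousOn)
        (fun η hη => ⟨hτ, hη⟩)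
    have hF : ContinuousWithinAt
        (fun η => D (τ, η) ((1:ℝ),(0:ℝ)) + D (τ, η) ((0:ℝ),(1:ℝ))) (Icc (0:ℝ) 1) 1 :=
      (((hDsliceEta τ hτ ((1:ℝ),(0:ℝ))).add (hDsliceEta τ hτ ((0:ℝ),(1:ℝ)))).continuousWithinAt
        h1mem)
    have hG : ContinuousWithinAt (fun η => 1 / N τ + K (Q τ η)) (Icc (0:ℝ) 1) 1 :=
      ((continuousOn_const.add (hK.smooth.continuous.comp_continuousOn hQcont)).continuousWithinAt
        h1mem)
    have hcl : (1:ℝ) ∈ closure (Ioo (0:ℝ) 1) := by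
      rw [closure_Ioo one_ne_zero.symm]; exact h1mem
    have heq : Set.EqOn (fun η => D (τ, η) ((1:ℝ),(0:ℝ)) + D (τ, η) ((0:ℝ),(1:ℝ)))
        (fun η => 1 / N τ + K (Q τ η)) (Ioo (0:ℝ) 1) := by
      intro η hη
      have hη' : η ∈ Icc (0:ℝ) 1 := Ioo_subset_Icc_self hη
      have := hpde τ hτ hτpos η hη
      simp only [hpdTau τ hτ η hη', hpdEta τ hτ η hη'] at this
      simpa using this
    have := eqAt_of_cwa hF hG Ioo_subset_Icc_self hcl heq
    rw [hpdTau τ hτ 1 h1mem, hpdEta τ hτ 1 h1mem]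
    simpa using this
  -- continuity of 1/N
  have hNinv : ContinuousOn (fun τ => 1 / N τ) (Ico0 T) :=
    continuousOn_const.div hNcont (fun τ hτ => (hNpos τ hτ).ne')
  -- 0 is in the closure of the positive times
  have hclosure0 : (0:ℝ) ∈ closure (Ico0 T ∩ Ioi 0) := by
    have hsub : Ioo (0:ℝ) (ε/2) ⊆ Ico0 T ∩ Ioi 0 := fun x hx =>
      ⟨hIoc.out h0mem hεmem ⟨hx.1.le, hx.2.le⟩, hx.1⟩
    exact closure_mono hsub (by
      rw [closure_Ioo (by positivity : (0:ℝ) < ε/2).ne]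
      exact ⟨le_refl 0, by positivity⟩)
  -- continuity of τ ↦ Q τ 1
  have hgcont : ContinuousOn (fun s => Q s 1) (Ico0 T) :=
    hreg.continuousOn.comp ((continuous_id.prodMk continuous_const).continuousOn)
      (fun τ hτ => ⟨hτ, h1mem⟩)
  constructor
  · -- (a) → (b)
    intro ha
    -- Lipschitz constant for K
    obtain ⟨C, hC⟩ := hK.bdd1
    set L : ℝ := max C 0 with hLdef
    have hL0 : (0:ℝ) ≤ L := le_max_right _ _
    have hKdiff : Differentiable ℝ K := hK.smooth.differentiable (by norm_num)
    have hLK : LipschitzWith L.toNNReal K := by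
      apply lipschitzWith_of_nnnorm_deriv_le hKdiff
      intro x
      rw [← NNReal.coe_le_coe, coe_nnnorm, Real.coe_toNNReal _ hL0, Real.norm_eq_abs]
      exact (hC x).trans (le_max_left _ _)
    have hKlip : ∀ x y : ℝ, |K x - K y| ≤ L * |x - y| := by
      intro x y
      have := hLK.dist_le_mul x y
      rwa [Real.dist_eq, Real.dist_eq, Real.coe_toNNReal _ hL0] at this
    -- the boundary value solves the ODE g' = K g - K ΦF
    have hg' : ∀ t ∈ Ico0 T, 0 < t →
        HasDerivWithinAt (fun s => Q s 1) (K (Q t 1) - K ΦF) (Ici t) t := by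
      intro t ht htpos
      have h1 := (hTau t ht 1 h1mem).mono (Ici_subset_Ici.2 ht.1)
      have h2 : D (t, 1) ((1:ℝ),(0:ℝ)) = K (Q t 1) - K ΦF := by
        have h3 := hbPDE t ht htpos
        rw [ha t ht] at h3
        rw [← hpdTau t ht 1 h1mem]
        linarith
      rwa [h2] at h1
    intro b hb
    rcases eq_or_lt_of_le hb.1 with hb0 | hbpos
    · rw [← hb0]; exact hinit1
    -- Gronwall estimate on [a', b] for every 0 < a' ≤ b, then let a' → 0
    have hIccb : Icc (0:ℝ) b ⊆ Ico0 T := fun x hx => hIoc.out h0mem hb hx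
    have key : ∀ a' ∈ Ioc (0:ℝ) b,
        |Q b 1 - ΦF| ≤ |Q a' 1 - ΦF| * Real.exp (L * b) := by
      intro a' ha'
      have hsub : Icc a' b ⊆ Icc (0:ℝ) b := Icc_subset_Icc ha'.1.le (le_refl b)
      have hmem : ∀ x ∈ Icc a' b, x ∈ Ico0 T := fun x hx => hIccb (hsub hx)
      have hcf : ContinuousOn (fun s => Q s 1 - ΦF) (Icc a' b) :=
        ((hgcont.mono (fun x hx => hmem x hx)).sub continuousOn_const)
      have hcf' : ∀ x ∈ Ico a' b,
          HasDerivWithinAt (fun s => Q s 1 - ΦF) (K (Q x 1) - K ΦF) (Ici x) x := by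
        intro x hx
        exact (hg' x (hmem x ⟨hx.1, hx.2.le⟩) (ha'.1.trans_le hx.1)).sub_const ΦF
      have hbound : ∀ x ∈ Ico a' b,
          ‖K (Q x 1) - K ΦF‖ ≤ L * ‖Q x 1 - ΦF‖ + 0 := by
        intro x hx
        rw [add_zero, Real.norm_eq_abs, Real.norm_eq_abs]
        exact hKlip _ _
      have := norm_le_gronwallBound_of_norm_deriv_right_le hcf hcf'
        (le_refl ‖Q a' 1 - ΦF‖) hbound b ⟨ha'.2, le_refl b⟩
      rw [gronwallBound_ε0, Real.norm_eq_abs, Real.norm_eq_abs] at this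
      refine this.trans ?_
      apply mul_le_mul_of_nonneg_left _ (abs_nonneg _)
      exact Real.exp_le_exp.2 (by nlinarith [ha'.1, hL0])
    -- pass to the limit a' → 0⁺
    have hne : (𝓝[Ioc (0:ℝ) b] 0).NeBot := by
      apply mem_closure_iff_nhdsWithin_neBot.1
      rw [closure_Ioc hbpos.ne]
      exact ⟨le_refl 0, hbpos.le⟩
    have htend : Tendsto (fun a' => |Q a' 1 - ΦF| * Real.exp (L * b))
        (𝓝[Ioc (0:ℝ) b] 0) (𝓝 0) := by
      have h1 : Tendsto (fun a' => Q a' 1) (𝓝[Ioc (0:ℝ) b] 0) (𝓝 (Q 0 1)) :=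
        (hgcont.continuousWithinAt h0mem).mono
          (fun x (hx : x ∈ Ioc (0:ℝ) b) => hIccb ⟨hx.1.le, hx.2⟩)
      rw [hinit1] at h1
      have h2 : Tendsto (fun a' => |Q a' 1 - ΦF| * Real.exp (L * b))
          (𝓝[Ioc (0:ℝ) b] 0) (𝓝 (|ΦF - ΦF| * Real.exp (L * b))) :=
        (((h1.sub tendsto_const_nhds).abs).mul tendsto_const_nhds)
      simpa using h2
    have hle : |Q b 1 - ΦF| ≤ 0 :=
      ge_of_tendsto htend (eventually_mem_nhdsWithin.mono fun a' ha' => key a' ha')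
    have := abs_nonneg (Q b 1 - ΦF)
    have : |Q b 1 - ΦF| = 0 := le_antisymm hle this
    have := abs_eq_zero.1 this
    linarith
  · -- (b) → (a)
    intro hbnd
    -- the τ–derivative at η = 1 vanishes
    have hTau0 : ∀ τ ∈ Ico0 T, pdTau Q τ 1 = 0 := by
      intro τ hτ
      have hev : (fun s => Q s 1) =ᶠ[𝓝[Ici (0:ℝ)] τ] fun _ => ΦF := by
        rw [hnhds τ hτ]
        exact eventually_mem_nhdsWithin.mono (fun s hs => hbnd s hs)
      have h1 : pdTau Q τ 1 = derivWithin (fun _ : ℝ => ΦF) (Ici 0) τ :=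
        hev.derivWithin_eq (hbnd τ hτ)
      rw [h1]
      exact (hasDerivWithinAt_const τ (Ici 0) ΦF).derivWithin (uniqueDiffOn_Ici 0 τ hτ.1)
    have hpos : ∀ τ ∈ Ico0 T, 0 < τ → 1 / N τ = pdEta Q τ 1 - K ΦF := by
      intro τ hτ hτpos
      have := hbPDE τ hτ hτpos
      rw [hTau0 τ hτ, hbnd τ hτ] at this
      linarith
    intro τ hτ
    rcases eq_or_lt_of_le hτ.1 with hτ0 | hτpos
    · -- extend to τ = 0 by continuity
      subst hτ0
      have hF : ContinuousWithinAt (fun τ => 1 / N τ) (Ico0 T) 0 :=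
        hNinv.continuousWithinAt h0mem
      have hG : ContinuousWithinAt (fun τ => D (τ, 1) ((0:ℝ),(1:ℝ)) - K ΦF) (Ico0 T) 0 :=
        ((hDsliceTau ((0:ℝ),(1:ℝ))).sub continuousOn_const).continuousWithinAt h0mem
      have heq : Set.EqOn (fun τ => 1 / N τ)
          (fun τ => D (τ, 1) ((0:ℝ),(1:ℝ)) - K ΦF) (Ico0 T ∩ Ioi 0) := by
        intro τ hτ'
        have := hpos τ hτ'.1 hτ'.2
        rw [hpdEta τ hτ'.1 1 h1mem] at this
        exact this
      have := eqAt_of_cwa hF hG inter_subset_left hclosure0 heq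
      rw [hpdEta 0 h0mem 1 h1mem]
      simpa using this
    · exact hpos τ hτ hτpos
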